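/- Let n be a power of 2, ℓ = log₂ n, d ≥ 1, m = d·ℓ, and let ε ∈ (0,1/4) be such that 1/(2ε) is a power of 2. Let m' = m − log₂(1/(2ε)), and for k ∈ {1,…,1/(2ε)} let S_k = {x ∈ {0,1}^m : (k−1)·ε·2^{m+1} ≤ val(x) ≤ k·ε·2^{m+1} − 1}. For j ∈ {1,…,m'} and k ∈ {1,…,1/(2ε)}, define g_{j,k} : {0,1}^m → ℝ by g_{j,k}(x) = 2·val(x) − 2^j − 1 if x_j = 1 and x ∈ S_k, and g_{j,k}(x) = 2·val(x) otherwise; and define ĝ_{j,k} : [n]^d → ℝ by ĝ_{j,k}(y) = g_{j,k}(φ(y)). Then ĝ_{j,k} is ε-far from unate: every unate G : [n]^d → ℝ satisfies |{y ∈ [n]^d : G(y) ≠ ĝ_{j,k}(y)}| ≥ ε·n^d. -/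

import Mathlib

open Finset
open scoped Classical

/-- `val(x) = ∑ x_i 2^{i-1}` of a bit vector (Lean coordinate `i` stands for the paper's
coordinate `i + 1`, with weight `2^i`). -/
def valB (m : ℕ) (x : Fin m → Bool) : ℕ :=
  ∑ i : Fin m, if x i then 2 ^ (i : ℕ) else 0

lemma valB_succ (m : ℕ) (x : Fin (m+1) → Bool) :
    valB (m+1) x = (if x 0 then 1 else 0) + 2 * valB m (fun i => x i.succ) := by
  rw [valB, Fin.sum_univ_succ]
  have h0 : (if x 0 = true then 2 ^ ((0:Fin (m+1)):ℕ) else 0) = (if x 0 = true then 1 else 0) := by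
    simp
  rw [h0]
  congr 1
  rw [valB, Finset.mul_sum]
  apply Finset.sum_congr rfl; intro i _
  split
  · rw [Fin.val_succ, pow_succ, mul_comm]
  · rfl

lemma valB_lt (m : ℕ) (x : Fin m → Bool) : valB m x < 2 ^ m := by
  induction m with
  | zero => simp [valB]
  | succ m ih =>
    have h := ih (fun i => x i.succ)
    rw [valB_succ]
    split <;> · simp only [pow_succ]; omega

lemma valB_testBit (m : ℕ) (x : Fin m → Bool) (i : ℕ) (h : i < m) :
    (valB m x).testBit i = x ⟨i, h⟩ := by
  induction m generalizing i with
  | zero => omega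
  | succ m ih =>
    rw [valB_succ]
    cases i with
    | zero =>
      rw [Nat.testBit_zero]
      rcases hx : x 0 <;> simp [hx, Nat.add_mul_mod_self_left]
    | succ i =>
      rw [Nat.testBit_succ]
      have : ((if x 0 then 1 else 0) + 2 * valB m (fun i => x i.succ)) / 2
          = valB m (fun i => x i.succ) := by split <;> omega
      rw [this, ih (fun i => x i.succ) i (by omega)]
      rfl

lemma valB_ofTestBit (m N : ℕ) (hN : N < 2 ^ m) :
    valB m (fun i : Fin m => N.testBit (i : ℕ)) = N := by
  apply Nat.eq_of_testBit_eq
  intro i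
  by_cases h : i < m
  · rw [valB_testBit m (fun i : Fin m => N.testBit (i : ℕ)) i h]
  · have h1 : (valB m (fun i : Fin m => N.testBit (i : ℕ))).testBit i = false :=
      Nat.testBit_lt_two_pow (lt_of_lt_of_le (valB_lt m _)
        (Nat.pow_le_pow_right (by norm_num) (by omega)))
    have h2 : N.testBit i = false :=
      Nat.testBit_lt_two_pow (lt_of_lt_of_le hN (Nat.pow_le_pow_right (by norm_num) (by omega)))
    rw [h1, h2]

lemma testBit_div_pow (N a b : ℕ) : (N / 2 ^ a).testBit b = N.testBit (a + b) := by
  rw [← Nat.shiftRight_eq_div_pow, Nat.testBit_shiftRight]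

lemma bit_false_of (j Q r : ℕ) (hr : r < 2 ^ j) :
    (2 ^ (j + 1) * Q + r).testBit j = false := by
  rw [Nat.testBit_eq_decide_div_mod_eq]
  have h1 : (2 ^ (j + 1) * Q + r) / 2 ^ j = 2 * Q := by
    have : (2:ℕ) ^ (j+1) * Q + r = 2 ^ j * (2 * Q) + r := by ring
    rw [this, Nat.mul_add_div (Nat.pow_pos (by norm_num)), Nat.div_eq_of_lt hr]
    omega
  rw [h1]
  simp [Nat.mul_mod_right]




lemma bit_true_of (j Q r : ℕ) (hr : r < 2 ^ j) :
    (2 ^ (j + 1) * Q + 2 ^ j + r).testBit j = true := by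
  rw [Nat.testBit_eq_decide_div_mod_eq]
  have h1 : (2 ^ (j + 1) * Q + 2 ^ j + r) / 2 ^ j = 2 * Q + 1 := by
    have : (2:ℕ) ^ (j+1) * Q + 2 ^ j + r = 2 ^ j * (2 * Q + 1) + r := by ring
    rw [this, Nat.mul_add_div (Nat.pow_pos (by norm_num)), Nat.div_eq_of_lt hr]
  rw [h1]
  simp [Nat.add_mul_mod_self_left, Nat.mul_add_mod]

lemma flip_bit (j Q r : ℕ) (hr : r < 2 ^ j) (i : ℕ) :
    (2 ^ (j + 1) * Q + 2 ^ j + r).testBit i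
      = if i = j then true else (2 ^ (j + 1) * Q + r).testBit i := by
  rcases lt_trichotomy i j with hij | rfl | hij
  · rw [if_neg (by omega)]
    have key : ∀ M : ℕ, (2:ℕ) ^ (i + 1) ∣ M → (M + r).testBit i = r.testBit i := by
      intro M hM
      obtain ⟨c, rfl⟩ := hM
      rw [Nat.testBit_eq_decide_div_mod_eq, Nat.testBit_eq_decide_div_mod_eq]
      have : (2:ℕ) ^ (i + 1) * c + r = r + 2 ^ i * (2 * c) := by ring
      rw [this, Nat.add_mul_div_left _ _ (Nat.pow_pos (by norm_num)),
        decide_eq_decide]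
      omega
    have d1 : (2:ℕ) ^ (i + 1) ∣ 2 ^ (j + 1) * Q + 2 ^ j := by
      apply Nat.dvd_add
      · exact Dvd.dvd.mul_right (pow_dvd_pow 2 (by omega)) Q
      · exact pow_dvd_pow 2 (by omega)
    have d2 : (2:ℕ) ^ (i + 1) ∣ 2 ^ (j + 1) * Q :=
      Dvd.dvd.mul_right (pow_dvd_pow 2 (by omega)) Q
    rw [key _ d1, key _ d2]
  · rw [if_pos rfl]
    exact bit_true_of _ Q r hr
  · rw [if_neg (by omega)]
    rw [Nat.testBit_eq_decide_div_mod_eq, Nat.testBit_eq_decide_div_mod_eq]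
    have e1 : (2:ℕ) ^ i = 2 ^ (j + 1) * 2 ^ (i - (j + 1)) := by
      rw [← pow_add]; congr 1; omega
    have h1 : (2 ^ (j + 1) * Q + 2 ^ j + r) / 2 ^ i = Q / 2 ^ (i - (j + 1)) := by
      rw [e1, ← Nat.div_div_eq_div_mul]
      congr 1
      have : (2:ℕ) ^ (j + 1) * Q + 2 ^ j + r = 2 ^ (j + 1) * Q + (2 ^ j + r) := by ring
      rw [this, Nat.mul_add_div (Nat.pow_pos (by norm_num)),
        Nat.div_eq_of_lt (by rw [pow_succ]; omega)]
      omega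
    have h2 : (2 ^ (j + 1) * Q + r) / 2 ^ i = Q / 2 ^ (i - (j + 1)) := by
      rw [e1, ← Nat.div_div_eq_div_mul]
      congr 1
      rw [Nat.mul_add_div (Nat.pow_pos (by norm_num)),
        Nat.div_eq_of_lt (by rw [pow_succ]; omega)]
      omega
    rw [h1, h2]

lemma pt_coord_testBit (l N t i : ℕ) (hi : i < l) :
    (N / 2 ^ (t * l) % 2 ^ l).testBit i = N.testBit (t * l + i) := by
  rw [Nat.testBit_mod_two_pow, testBit_div_pow]
  simp [hi]

lemma unpack (j X r : ℕ) (hr : r < 2 ^ (j + 1)) :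
    (2 ^ (j + 1) * X + r) % 2 ^ (j + 1) = r ∧ (2 ^ (j + 1) * X + r) / 2 ^ (j + 1) = X := by
  constructor
  · rw [Nat.mul_add_mod, Nat.mod_eq_of_lt hr]
  · rw [Nat.mul_add_div (Nat.pow_pos (by norm_num)), Nat.div_eq_of_lt hr]
    omega

lemma pair_coord_ne (l j t t0 s0 : ℕ) (hl : 0 < l) (hs0 : s0 < l) (hdecomp : t0 * l + s0 = j)
    (ht : t ≠ t0) (Q r : ℕ) (hr : r < 2 ^ j) :
    (2 ^ (j + 1) * Q + 2 ^ j + r) / 2 ^ (t * l) % 2 ^ l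
      = (2 ^ (j + 1) * Q + r) / 2 ^ (t * l) % 2 ^ l := by
  apply Nat.eq_of_testBit_eq
  intro i
  by_cases hi : i < l
  · rw [pt_coord_testBit l _ t i hi, pt_coord_testBit l _ t i hi,
      flip_bit j Q r hr (t * l + i), if_neg]
    intro hEq
    have hjd : j = i + t * l := by rw [← hEq, Nat.add_comm]
    have : j / l = t := by
      rw [hjd, Nat.add_mul_div_right _ _ hl, Nat.div_eq_of_lt hi, Nat.zero_add]
    have ht0 : j / l = t0 := by
      rw [← hdecomp, Nat.add_comm, Nat.add_mul_div_right _ _ hl, Nat.div_eq_of_lt hs0,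
        Nat.zero_add]
    exact ht (this ▸ ht0 ▸ rfl)
  · have b2 : (2:ℕ) ^ l ≤ 2 ^ i := Nat.pow_le_pow_right (by norm_num) (by omega)
    rw [Nat.testBit_lt_two_pow (lt_of_lt_of_le (Nat.mod_lt _ (Nat.pow_pos (by norm_num))) b2),
      Nat.testBit_lt_two_pow (lt_of_lt_of_le (Nat.mod_lt _ (Nat.pow_pos (by norm_num))) b2)]

lemma pair_coord_t0 (l j t0 s0 : ℕ) (hl : 0 < l) (hs0 : s0 < l) (hdecomp : t0 * l + s0 = j)
    (Q r : ℕ) (hr : r < 2 ^ j) :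
    (2 ^ (j + 1) * Q + r) / 2 ^ (t0 * l) % 2 ^ l + 2 ^ s0 < 2 ^ l ∧
    (2 ^ (j + 1) * Q + 2 ^ j + r) / 2 ^ (t0 * l) % 2 ^ l
      = (2 ^ (j + 1) * Q + r) / 2 ^ (t0 * l) % 2 ^ l + 2 ^ s0 := by
  set X := (2 ^ (j + 1) * Q + r) / 2 ^ (t0 * l) with hX
  set y := X % 2 ^ l with hy
  -- bit s0 of X is false
  have hbitX : X.testBit s0 = false := by
    rw [hX, testBit_div_pow, hdecomp]
    exact bit_false_of j Q r hr
  have hbity : y.testBit s0 = false := by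
    rw [hy, Nat.testBit_mod_two_pow, hbitX, Bool.and_false]
  -- y % 2^(s0+1) < 2^s0
  have hy1 : y % 2 ^ (s0 + 1) < 2 ^ s0 := by
    have hmm : y % (2 ^ s0 * 2) = y % 2 ^ s0 + 2 ^ s0 * (y / 2 ^ s0 % 2) := Nat.mod_mul
    have hb0 : y / 2 ^ s0 % 2 = 0 := by
      rw [Nat.testBit_eq_decide_div_mod_eq] at hbity
      simpa using hbity
    rw [pow_succ]
    rw [hb0] at hmm
    have := Nat.mod_lt y (show 0 < 2 ^ s0 from Nat.pow_pos (by norm_num))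
    omega
  -- y + 2^s0 < 2^l
  have hylt : y < 2 ^ l := Nat.mod_lt _ (Nat.pow_pos (by norm_num))
  have hkey : y + 2 ^ s0 < 2 ^ l := by
    have hdm := Nat.div_add_mod y (2 ^ (s0 + 1))
    set c := y / 2 ^ (s0 + 1) with hc
    set w := y % 2 ^ (s0 + 1) with hw
    have hcl : c < 2 ^ (l - s0 - 1) := by
      have h2l : (2:ℕ) ^ l = 2 ^ (s0 + 1) * 2 ^ (l - s0 - 1) := by
        rw [← pow_add]; congr 1; omega
      by_contra hcon
      push_neg at hcon
      have : (2:ℕ) ^ l ≤ 2 ^ (s0 + 1) * c := by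
        rw [h2l]; exact Nat.mul_le_mul_left _ hcon
      omega
    have hstep : y + 2 ^ s0 < 2 ^ (s0 + 1) * (c + 1) := by
      have : w + 2 ^ s0 < 2 ^ (s0 + 1) := by rw [pow_succ]; omega
      have hmul : 2 ^ (s0 + 1) * (c + 1) = 2 ^ (s0 + 1) * c + 2 ^ (s0 + 1) := by ring
      omega
    have hstep2 : 2 ^ (s0 + 1) * (c + 1) ≤ 2 ^ l := by
      have h2l : (2:ℕ) ^ l = 2 ^ (s0 + 1) * 2 ^ (l - s0 - 1) := by
        rw [← pow_add]; congr 1; omega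
      rw [h2l]
      exact Nat.mul_le_mul_left _ hcl
    omega
  constructor
  · exact hkey
  · -- div relation
    have h2j : (2:ℕ) ^ j = 2 ^ s0 * 2 ^ (t0 * l) := by
      rw [← pow_add]; congr 1; rw [Nat.add_comm]; exact hdecomp.symm
    have hdiv : (2 ^ (j + 1) * Q + 2 ^ j + r) / 2 ^ (t0 * l) = X + 2 ^ s0 := by
      have harr : 2 ^ (j + 1) * Q + 2 ^ j + r = (2 ^ (j + 1) * Q + r) + 2 ^ s0 * 2 ^ (t0 * l) := by
        rw [← h2j]; ring
      rw [harr, Nat.add_mul_div_right _ _ (Nat.pow_pos (by norm_num)), hX]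
    rw [hdiv]
    have hXdm := Nat.div_add_mod X (2 ^ l)
    have harr2 : X + 2 ^ s0 = 2 ^ l * (X / 2 ^ l) + (y + 2 ^ s0) := by omega
    rw [harr2, Nat.mul_add_mod, Nat.mod_eq_of_lt hkey]

def ptD (l d : ℕ) (N : ℕ) : Fin d → Fin (2 ^ l) := fun t =>
  ⟨N / 2 ^ ((t : ℕ) * l) % 2 ^ l, Nat.mod_lt _ (Nat.pow_pos (by norm_num))⟩

lemma ghat_arg (l d : ℕ) (hl : 0 < l) (N : ℕ) :
    (fun jj : Fin (d * l) =>
        Nat.testBit ((ptD l d N ⟨(jj : ℕ) / l,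
          Nat.div_lt_of_lt_mul (Nat.mul_comm d l ▸ jj.isLt)⟩ : Fin (2 ^ l)) : ℕ) ((jj : ℕ) % l))
      = fun jj : Fin (d * l) => N.testBit (jj : ℕ) := by
  funext jj
  show (N / 2 ^ ((jj : ℕ) / l * l) % 2 ^ l).testBit ((jj : ℕ) % l) = _
  rw [pt_coord_testBit l N _ _ (Nat.mod_lt _ hl)]
  congr 1
  rw [Nat.mul_comm]
  exact Nat.div_add_mod _ _

lemma decode (l d : ℕ) (hl : 0 < l) (N : ℕ) (hN : N < 2 ^ (d * l)) :
    valB (d * l) (fun jj : Fin (d * l) =>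
        Nat.testBit ((ptD l d N ⟨(jj : ℕ) / l,
          Nat.div_lt_of_lt_mul (Nat.mul_comm d l ▸ jj.isLt)⟩ : Fin (2 ^ l)) : ℕ) ((jj : ℕ) % l))
      = N := by
  rw [ghat_arg l d hl N, valB_ofTestBit _ N hN]

lemma ptD_inj (l d : ℕ) (hl : 0 < l) (N1 N2 : ℕ) (h1 : N1 < 2 ^ (d * l))
    (h2 : N2 < 2 ^ (d * l)) (h : ptD l d N1 = ptD l d N2) : N1 = N2 := by
  rw [← decode l d hl N1 h1, ← decode l d hl N2 h2, h]

def eN' (j A' a : ℕ) : ℕ := 2 ^ (j + 1) * (A' + a / 2 ^ j) + a % 2 ^ j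

def eN (j A' a : ℕ) : ℕ := 2 ^ (j + 1) * (A' + a / 2 ^ j) + 2 ^ j + a % 2 ^ j

lemma eN_eq (j A' a : ℕ) : eN j A' a = eN' j A' a + 2 ^ j := by
  unfold eN eN'; omega

lemma eN'_dm (j A' a : ℕ) :
    eN' j A' a % 2 ^ (j + 1) = a % 2 ^ j ∧ eN' j A' a / 2 ^ (j + 1) = A' + a / 2 ^ j := by
  have hr : a % 2 ^ j < 2 ^ (j + 1) := by
    have := Nat.mod_lt a (show 0 < 2 ^ j from Nat.pow_pos (by norm_num))
    have : (2:ℕ) ^ (j + 1) = 2 ^ j * 2 := pow_succ 2 j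
    omega
  exact unpack j _ _ hr

lemma eN_dm (j A' a : ℕ) :
    eN j A' a % 2 ^ (j + 1) = 2 ^ j + a % 2 ^ j ∧ eN j A' a / 2 ^ (j + 1) = A' + a / 2 ^ j := by
  have hmod := Nat.mod_lt a (show 0 < 2 ^ j from Nat.pow_pos (by norm_num))
  have hps : (2:ℕ) ^ (j + 1) = 2 ^ j * 2 := pow_succ 2 j
  have hr : 2 ^ j + a % 2 ^ j < 2 ^ (j + 1) := by omega
  have harr : eN j A' a = 2 ^ (j + 1) * (A' + a / 2 ^ j) + (2 ^ j + a % 2 ^ j) := by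
    unfold eN; omega
  rw [harr]
  exact unpack j _ _ hr

lemma pair_disj (j A' a1 a2 : ℕ) :
    (eN j A' a1 = eN j A' a2 → a1 = a2) ∧ (eN' j A' a1 = eN' j A' a2 → a1 = a2) ∧
    eN j A' a1 ≠ eN' j A' a2 := by
  have h1 := eN_dm j A' a1
  have h2 := eN_dm j A' a2
  have h1' := eN'_dm j A' a1
  have h2' := eN'_dm j A' a2
  have hm1 := Nat.mod_lt a1 (show 0 < 2 ^ j from Nat.pow_pos (by norm_num))
  have hm2 := Nat.mod_lt a2 (show 0 < 2 ^ j from Nat.pow_pos (by norm_num))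
  refine ⟨fun h => ?_, fun h => ?_, fun h => ?_⟩
  · have hmm : 2 ^ j + a1 % 2 ^ j = 2 ^ j + a2 % 2 ^ j := by
      rw [← h1.1, ← h2.1, h]
    have hdd : A' + a1 / 2 ^ j = A' + a2 / 2 ^ j := by rw [← h1.2, ← h2.2, h]
    have e1 := Nat.div_add_mod a1 (2 ^ j)
    have e2 := Nat.div_add_mod a2 (2 ^ j)
    have hq : a1 / 2 ^ j = a2 / 2 ^ j := by omega
    have hr : a1 % 2 ^ j = a2 % 2 ^ j := by omega
    rw [← e1, ← e2, hq, hr]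
  · have hmm : a1 % 2 ^ j = a2 % 2 ^ j := by rw [← h1'.1, ← h2'.1, h]
    have hdd : A' + a1 / 2 ^ j = A' + a2 / 2 ^ j := by rw [← h1'.2, ← h2'.2, h]
    have e1 := Nat.div_add_mod a1 (2 ^ j)
    have e2 := Nat.div_add_mod a2 (2 ^ j)
    have hq : a1 / 2 ^ j = a2 / 2 ^ j := by omega
    rw [← e1, ← e2, hq, hmm]
  · have hmm : 2 ^ j + a1 % 2 ^ j = a2 % 2 ^ j := by rw [← h1.1, ← h2'.1, h]
    omega

lemma update_pair (l d j s0 : ℕ) (hl : 0 < l) (t0 : Fin d) (hs0 : s0 < l)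
    (hdecomp : (t0 : ℕ) * l + s0 = j) (Q r : ℕ) (hr : r < 2 ^ j) :
    ∃ u v : Fin (2 ^ l), (u : ℕ) + 2 ^ s0 = (v : ℕ) ∧
      ptD l d (2 ^ (j + 1) * Q + r) = Function.update (ptD l d (2 ^ (j + 1) * Q + r)) t0 u ∧
      ptD l d (2 ^ (j + 1) * Q + 2 ^ j + r)
        = Function.update (ptD l d (2 ^ (j + 1) * Q + r)) t0 v := by
  obtain ⟨hlt, heq⟩ := pair_coord_t0 l j (t0 : ℕ) s0 hl hs0 hdecomp Q r hr
  refine ⟨ptD l d (2 ^ (j + 1) * Q + r) t0,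
    ⟨(2 ^ (j + 1) * Q + r) / 2 ^ ((t0 : ℕ) * l) % 2 ^ l + 2 ^ s0, hlt⟩, rfl,
    (Function.update_eq_self _ _).symm, ?_⟩
  funext t
  by_cases htt : t = t0
  · subst htt
    rw [Function.update_self]
    exact Fin.ext heq
  · rw [Function.update_of_ne htt]
    exact Fin.ext (pair_coord_ne l j (t : ℕ) (t0 : ℕ) s0 hl hs0 hdecomp
      (fun hE => htt (Fin.ext hE)) Q r hr)


/-- The functions `ĝ_{j,k} = g_{j,k} ∘ φ : [n]^d → ℝ` of the hard `No`-distribution are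
`ε`-far from unate.  Here `n = 2^ℓ`, `m = dℓ`, `ε = 2^{-(s+1)}` (so `1/(2ε) = 2^s`),
`m' = m - s`, and for `j ∈ {1,…,m'}`, `k ∈ {1,…,2^s}`:
`g_{j,k}(x) = 2·val(x) - 2^j - 1` if `x_j = 1` and `x ∈ S_k`, and `2·val(x)` otherwise,
where `S_k = {x : (k-1)·ε·2^{m+1} ≤ val(x) ≤ k·ε·2^{m+1} - 1}`; and
`φ(y)` is the concatenation of the binary representations of `y_t - 1` (LSB first).
A Lean point `y : Fin d → Fin n` with coordinates valued in `{0,…,n-1}` stands for the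
paper's point `y + 1 ∈ [n]^d`, so `(y t : ℕ)` is the paper's `y_t - 1`. -/
theorem stmt15 (l : ℕ) (hl : 1 ≤ l) (n : ℕ) (hn : n = 2 ^ l)
    (d : ℕ) (hd : 1 ≤ d)
    (s : ℕ) (ε : ℝ) (hε : ε = 1 / 2 ^ (s + 1)) (hε4 : ε < 1 / 4)
    (jp k : ℕ) (hjp1 : 1 ≤ jp) (hjp2 : jp ≤ d * l - s) (hk1 : 1 ≤ k) (hk2 : k ≤ 2 ^ s)
    (g : (Fin (d * l) → Bool) → ℝ)
    (hg : ∀ x, g x =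
      if x ⟨jp - 1, by omega⟩ = true ∧
         ((k : ℝ) - 1) * ε * 2 ^ (d * l + 1) ≤ (valB (d * l) x : ℝ) ∧
         (valB (d * l) x : ℝ) ≤ (k : ℝ) * ε * 2 ^ (d * l + 1) - 1
      then 2 * (valB (d * l) x : ℝ) - 2 ^ jp - 1
      else 2 * (valB (d * l) x : ℝ))
    (ghat : (Fin d → Fin n) → ℝ)
    (hghat : ∀ y, ghat y =
      g (fun jj => Nat.testBit (y ⟨(jj : ℕ) / l, Nat.div_lt_of_lt_mul (Nat.mul_comm d l ▸ jj.isLt)⟩ : ℕ)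
          ((jj : ℕ) % l))) :
    ∀ G : (Fin d → Fin n) → ℝ,
      (∃ b : Fin d → Bool, ∀ t : Fin d, ∀ y : Fin d → Fin n, ∀ u v : Fin n, u ≤ v →
        if b t then G (Function.update y t v) ≤ G (Function.update y t u)
        else G (Function.update y t u) ≤ G (Function.update y t v)) →
      ε * (n : ℝ) ^ d ≤ (Set.ncard {y : Fin d → Fin n | G y ≠ ghat y} : ℝ) := by
  subst hn
  intro G hG
  obtain ⟨b, hb⟩ := hG
  have hl0 : 0 < l := hl
  have hjm : jp + s ≤ d * l := by omega
  have hs1 : 1 ≤ s := by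
    by_contra hs
    push_neg at hs
    interval_cases s
    rw [hε] at hε4; norm_num at hε4
  obtain ⟨j, rfl⟩ : ∃ j, jp = j + 1 := ⟨jp - 1, by omega⟩
  simp only [Nat.add_sub_cancel] at hg
  have hjl : j < d * l := by omega
  have ht0lt : j / l < d := Nat.div_lt_of_lt_mul (by rw [Nat.mul_comm]; exact hjl)
  set t0 : Fin d := ⟨j / l, ht0lt⟩ with ht0def
  have hs0l : j % l < l := Nat.mod_lt _ hl0
  have hjdecomp : (t0 : ℕ) * l + j % l = j := by
    show j / l * l + j % l = j
    rw [Nat.mul_comm]; exact Nat.div_add_mod j l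
  set M := 2 ^ (d * l - s - 1) with hM
  set P := 2 ^ (d * l - s) with hP
  have hPM : P = 2 * M := by rw [hP, hM, ← pow_succ']; congr 1; omega
  have hjP : (2:ℕ) ^ (j + 1) ∣ P := pow_dvd_pow 2 (by omega)
  have hjM : (2:ℕ) ^ j ∣ M := pow_dvd_pow 2 (by omega)
  set A := if b t0 = true then (if k = 1 then P else 0) else (k - 1) * P with hA
  have hdvdA : (2:ℕ) ^ (j + 1) ∣ A := by
    rw [hA]; split
    · split
      exacts [hjP, dvd_zero _]
    · exact Dvd.dvd.mul_left hjP _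
  have hPpos : 0 < P := Nat.pow_pos (by norm_num)
  have h2m : (2:ℕ) ^ (d * l) = 2 ^ s * P := by rw [hP, ← pow_add]; congr 1; omega
  have hAP : A + P ≤ 2 ^ (d * l) := by
    rw [h2m, hA]; split
    · split
      · have : 2 * P ≤ 2 ^ s * P := by
          apply Nat.mul_le_mul_right
          calc (2:ℕ) = 2 ^ 1 := (pow_one 2).symm
            _ ≤ 2 ^ s := Nat.pow_le_pow_right (by norm_num) hs1
        omega
      · have : P ≤ 2 ^ s * P := Nat.le_mul_of_pos_left _ (Nat.pow_pos (by norm_num))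
        omega
    · obtain ⟨k', rfl⟩ : ∃ k', k = k' + 1 := ⟨k - 1, by omega⟩
      have hkk : (k' + 1 - 1) * P + P = (k' + 1) * P := by
        simp [Nat.add_mul, Nat.one_mul]
      rw [hkk]
      exact Nat.mul_le_mul_right _ hk2
  set A' := A / 2 ^ (j + 1) with hA'
  have hAA' : 2 ^ (j + 1) * A' = A := Nat.mul_div_cancel' hdvdA
  have hrlt : ∀ a : ℕ, a % 2 ^ j < 2 ^ j :=
    fun a => Nat.mod_lt _ (Nat.pow_pos (by norm_num))
  -- bounds on eN
  have hN'lb : ∀ a : ℕ, A ≤ eN' j A' a := by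
    intro a
    unfold eN'
    have : 2 ^ (j + 1) * (A' + a / 2 ^ j) = A + 2 ^ (j + 1) * (a / 2 ^ j) := by
      rw [Nat.mul_add, hAA']
    omega
  have hNub : ∀ a : ℕ, a < M → eN j A' a < A + P := by
    intro a ha
    have hqlt : a / 2 ^ j < M / 2 ^ j := Nat.div_lt_div_of_lt_of_dvd hjM ha
    have hmul : 2 ^ (j + 1) * (a / 2 ^ j + 1) ≤ 2 ^ (j + 1) * (M / 2 ^ j) :=
      Nat.mul_le_mul_left _ (by omega)
    have hcan : 2 ^ (j + 1) * (M / 2 ^ j) = 2 * M := by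
      rw [pow_succ]
      calc 2 ^ j * 2 * (M / 2 ^ j) = 2 * (2 ^ j * (M / 2 ^ j)) := by ring
        _ = 2 * M := by rw [Nat.mul_div_cancel' hjM]
    have hsplit : 2 ^ (j + 1) * (a / 2 ^ j + 1) = 2 ^ (j + 1) * (a / 2 ^ j) + 2 ^ (j + 1) := by
      ring
    have hps : (2:ℕ) ^ (j + 1) = 2 ^ j * 2 := pow_succ 2 j
    have hmoda := hrlt a
    have hform : eN j A' a = A + 2 ^ (j + 1) * (a / 2 ^ j) + 2 ^ j + a % 2 ^ j := by
      unfold eN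
      have : 2 ^ (j + 1) * (A' + a / 2 ^ j) = A + 2 ^ (j + 1) * (a / 2 ^ j) := by
        rw [Nat.mul_add, hAA']
      omega
    rw [hform, hPM]
    omega
  have hNA : ∀ a : ℕ, eN j A' a = eN' j A' a + 2 ^ j := eN_eq j A'
  have hNlt : ∀ a : ℕ, a < M → eN j A' a < 2 ^ (d * l) :=
    fun a ha => lt_of_lt_of_le (hNub a ha) hAP
  have hN'lt : ∀ a : ℕ, a < M → eN' j A' a < 2 ^ (d * l) := by
    intro a ha
    have := hNA a
    have := hNlt a ha
    omega
  -- nat-interval membership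
  have hmem : ∀ x : ℕ, A ≤ x → x < A + P →
      (((k - 1) * P ≤ x ∧ x < k * P) ↔ b t0 = false) := by
    intro x hx1 hx2
    rw [hA] at hx1 hx2
    by_cases hbt : b t0 = true
    · rw [if_pos hbt] at hx1 hx2
      have hgoal : ¬((k - 1) * P ≤ x ∧ x < k * P) := by
        by_cases hk : k = 1
        · rw [if_pos hk] at hx1 hx2
          subst hk
          rintro ⟨-, h2⟩
          simp only [Nat.one_mul] at h2
          omega
        · rw [if_neg hk] at hx1 hx2
          rintro ⟨h1, -⟩
          have hPk : P ≤ (k - 1) * P := Nat.le_mul_of_pos_left _ (by omega)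
          omega
      constructor
      · intro hcc; exact absurd hcc hgoal
      · intro hf; rw [hf] at hbt; simp at hbt
    · rw [if_neg hbt] at hx1 hx2
      have hbt' : b t0 = false := by
        cases hbc : b t0
        · rfl
        · exact absurd hbc hbt
      obtain ⟨k', rfl⟩ : ∃ k', k = k' + 1 := ⟨k - 1, by omega⟩
      simp only [Nat.add_sub_cancel] at hx1 hx2 ⊢
      refine iff_of_true ⟨hx1, ?_⟩ hbt'
      have : (k' + 1) * P = k' * P + P := by ring
      omega
  -- real bounds from nat bounds
  have hPr : ε * 2 ^ (d * l + 1) = (P : ℝ) := by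
    rw [hε, hP]
    push_cast
    have hsplit : (2:ℝ) ^ (d * l + 1) = 2 ^ (s + 1) * 2 ^ (d * l - s) := by
      rw [← pow_add]; congr 1; omega
    rw [hsplit]
    field_simp
  have hkc : ((k - 1 : ℕ) : ℝ) = (k : ℝ) - 1 := by
    rw [Nat.cast_sub hk1, Nat.cast_one]
  have hrealS : ∀ x : ℕ, ((k - 1) * P ≤ x ∧ x < k * P) →
      (((k:ℝ) - 1) * ε * 2 ^ (d * l + 1) ≤ (x:ℝ) ∧
        (x:ℝ) ≤ (k:ℝ) * ε * 2 ^ (d * l + 1) - 1) := by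
    rintro x ⟨h1, h2⟩
    have h1' : (((k - 1) * P : ℕ) : ℝ) ≤ (x : ℝ) := Nat.cast_le.mpr h1
    rw [Nat.cast_mul, hkc] at h1'
    have h2' : ((x : ℝ) + 1) ≤ ((k * P : ℕ) : ℝ) := by
      have : ((x + 1 : ℕ) : ℝ) ≤ ((k * P : ℕ) : ℝ) := Nat.cast_le.mpr (by omega)
      push_cast at this ⊢
      linarith
    rw [Nat.cast_mul] at h2'
    constructor
    · rw [mul_assoc, hPr]; exact h1'
    · rw [mul_assoc, hPr]; linarith
  have hrealNS : ∀ x : ℕ, ¬((k - 1) * P ≤ x ∧ x < k * P) →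
      ¬(((k:ℝ) - 1) * ε * 2 ^ (d * l + 1) ≤ (x:ℝ) ∧
        (x:ℝ) ≤ (k:ℝ) * ε * 2 ^ (d * l + 1) - 1) := by
    rintro x hnot ⟨h1, h2⟩
    apply hnot
    rw [mul_assoc, hPr] at h1 h2
    constructor
    · have : (((k - 1) * P : ℕ) : ℝ) ≤ (x : ℝ) := by
        rw [Nat.cast_mul, hkc]; exact h1
      exact_mod_cast this
    · have : ((x + 1 : ℕ) : ℝ) ≤ ((k * P : ℕ) : ℝ) := by push_cast; linarith
      have := Nat.cast_le.mp this
      omega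
  -- evaluation of ghat on points
  have heval : ∀ x : ℕ, x < 2 ^ (d * l) → ghat (ptD l d x) =
      if x.testBit j = true ∧
          (((k:ℝ) - 1) * ε * 2 ^ (d * l + 1) ≤ (x:ℝ) ∧
            (x:ℝ) ≤ (k:ℝ) * ε * 2 ^ (d * l + 1) - 1)
      then 2 * (x:ℝ) - 2 ^ (j + 1) - 1 else 2 * (x:ℝ) := by
    intro x hx
    rw [hghat, ghat_arg l d hl0 x, hg, valB_ofTestBit (d * l) x hx]
  -- bit values
  have hbitN : ∀ a : ℕ, (eN j A' a).testBit j = true := by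
    intro a
    unfold eN
    exact bit_true_of j _ _ (hrlt a)
  have hbitN' : ∀ a : ℕ, (eN' j A' a).testBit j = false := by
    intro a
    unfold eN'
    exact bit_false_of j _ _ (hrlt a)
  -- values of ghat at the pair
  have hvalN : ∀ a : ℕ, a < M → ghat (ptD l d (eN j A' a)) =
      (if b t0 = false then 2 * (eN' j A' a : ℝ) - 1 else 2 * (eN j A' a : ℝ)) := by
    intro a ha
    have hAle : A ≤ eN j A' a := by
      have h1 := hN'lb a
      have h2 := hNA a
      omega
    have hm := hmem (eN j A' a) hAle (hNub a ha)
    rw [heval _ (hNlt a ha)]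
    cases hbt : b t0 with
    | false =>
      rw [if_pos ⟨hbitN a, hrealS _ (hm.mpr hbt)⟩]
      have hcast : (eN j A' a : ℝ) = (eN' j A' a : ℝ) + 2 ^ j := by
        rw [hNA a]; push_cast; ring
      rw [hcast, pow_succ, if_pos (rfl : (false:Bool) = false)]
      ring
    | true =>
      have hnm : ¬((k - 1) * P ≤ eN j A' a ∧ eN j A' a < k * P) := by
        intro hcc
        rw [hm.mp hcc] at hbt
        simp at hbt
      rw [if_neg (fun hcc => (hrealNS _ hnm) hcc.2)]
      simp [hbt]
  have hvalN' : ∀ a : ℕ, a < M → ghat (ptD l d (eN' j A' a)) = 2 * (eN' j A' a : ℝ) := by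
    intro a ha
    rw [heval _ (hN'lt a ha), if_neg]
    intro hcc
    have := hcc.1
    rw [hbitN' a] at this
    simp at this
  -- key violation
  have key : ∀ a : ℕ, a < M →
      G (ptD l d (eN j A' a)) ≠ ghat (ptD l d (eN j A' a)) ∨
      G (ptD l d (eN' j A' a)) ≠ ghat (ptD l d (eN' j A' a)) := by
    intro a ha
    obtain ⟨u, v, huv, hup1, hup2⟩ := update_pair l d j (j % l) hl0 t0 hs0l hjdecomp
      (A' + a / 2 ^ j) (a % 2 ^ j) (hrlt a)
    have e1 : (2 ^ (j + 1) * (A' + a / 2 ^ j) + a % 2 ^ j) = eN' j A' a := rfl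
    have e2 : (2 ^ (j + 1) * (A' + a / 2 ^ j) + 2 ^ j + a % 2 ^ j) = eN j A' a := rfl
    rw [e1] at hup1 hup2
    rw [e2] at hup2
    have hle_uv : u ≤ v := by
      rw [Fin.le_def, ← huv]
      exact Nat.le_add_right _ _
    have hps0 : 0 < 2 ^ (j % l) := Nat.pow_pos (by norm_num)
    have hGuv := hb t0 (ptD l d (eN' j A' a)) u v hle_uv
    by_contra hcon
    push_neg at hcon
    obtain ⟨hc1, hc2⟩ := hcon
    rw [hvalN a ha] at hc1
    rw [hvalN' a ha] at hc2
    have hG1 : G (ptD l d (eN j A' a)) = G (Function.update (ptD l d (eN' j A' a)) t0 v) := by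
      rw [← hup2]
    have hG2 : G (ptD l d (eN' j A' a)) = G (Function.update (ptD l d (eN' j A' a)) t0 u) := by
      rw [← hup1]
    have hlt2j : (eN' j A' a : ℝ) < (eN j A' a : ℝ) := by
      have h2 := hNA a
      have : (0:ℕ) < 2 ^ j := Nat.pow_pos (by norm_num)
      exact_mod_cast (by omega : eN' j A' a < eN j A' a)
    cases hbt : b t0 with
    | true =>
      rw [hbt] at hGuv
      simp only [if_true] at hGuv
      rw [← hG1, ← hG2] at hGuv
      rw [hc1, hc2] at hGuv
      rw [if_neg (by rw [hbt]; simp)] at hGuv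
      linarith
    | false =>
      rw [hbt] at hGuv
      simp only [Bool.false_eq_true, if_false] at hGuv
      rw [← hG2, ← hG1] at hGuv
      rw [hc1, hc2] at hGuv
      rw [if_pos hbt] at hGuv
      linarith
  -- injection
  set F : ℕ → (Fin d → Fin (2 ^ l)) := fun a =>
    if G (ptD l d (eN j A' a)) ≠ ghat (ptD l d (eN j A' a)) then ptD l d (eN j A' a)
    else ptD l d (eN' j A' a) with hF
  have hFbad : ∀ a : ℕ, a < M → F a ∈ {y : Fin d → Fin (2 ^ l) | G y ≠ ghat y} := by
    intro a ha
    simp only [hF]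
    by_cases hcond : G (ptD l d (eN j A' a)) ≠ ghat (ptD l d (eN j A' a))
    · rw [if_pos hcond]; exact hcond
    · rw [if_neg hcond]
      rcases key a ha with h | h
      · exact absurd h hcond
      · exact h
  have hinj : Set.InjOn F ↑(Finset.range M) := by
    intro a1 h1 a2 h2 hFa
    simp only [Finset.coe_range, Set.mem_Iio] at h1 h2
    have hd1 := pair_disj j A' a1 a2
    have hd2 := pair_disj j A' a2 a1
    have inj12 : ∀ x1 x2 : ℕ, x1 < 2 ^ (d * l) → x2 < 2 ^ (d * l) →
        ptD l d x1 = ptD l d x2 → x1 = x2 := fun x1 x2 hx1 hx2 => ptD_inj l d hl0 x1 x2 hx1 hx2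
    simp only [hF] at hFa
    by_cases c1 : G (ptD l d (eN j A' a1)) ≠ ghat (ptD l d (eN j A' a1)) <;>
      by_cases c2 : G (ptD l d (eN j A' a2)) ≠ ghat (ptD l d (eN j A' a2))
    · rw [if_pos c1, if_pos c2] at hFa
      exact hd1.1 (inj12 _ _ (hNlt a1 h1) (hNlt a2 h2) hFa)
    · rw [if_pos c1, if_neg c2] at hFa
      exact absurd (inj12 _ _ (hNlt a1 h1) (hN'lt a2 h2) hFa) hd1.2.2
    · rw [if_neg c1, if_pos c2] at hFa
      exact absurd (inj12 _ _ (hNlt a2 h2) (hN'lt a1 h1) hFa.symm) hd2.2.2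
    · rw [if_neg c1, if_neg c2] at hFa
      exact hd1.2.1 (inj12 _ _ (hN'lt a1 h1) (hN'lt a2 h2) hFa)
  have hsub : ↑(Finset.image F (Finset.range M)) ⊆ {y : Fin d → Fin (2 ^ l) | G y ≠ ghat y} := by
    intro y hy
    simp only [Finset.coe_image, Set.mem_image, Finset.mem_coe, Finset.mem_range] at hy
    obtain ⟨a, ha, rfl⟩ := hy
    exact hFbad a ha
  have hcard : (Finset.image F (Finset.range M)).card = M := by
    rw [Finset.card_image_of_injOn hinj, Finset.card_range]
  have hle : M ≤ Set.ncard {y : Fin d → Fin (2 ^ l) | G y ≠ ghat y} := by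
    rw [← hcard, ← Set.ncard_coe_finset]
    exact Set.ncard_le_ncard hsub (Set.toFinite _)
  have hfin : ε * ((2 ^ l : ℕ) : ℝ) ^ d = (M : ℝ) := by
    rw [hε, hM]
    push_cast
    rw [← pow_mul, Nat.mul_comm l d]
    have hsplit : (2:ℝ) ^ (d * l) = 2 ^ (s + 1) * 2 ^ (d * l - s - 1) := by
      rw [← pow_add]; congr 1; omega
    rw [hsplit]
    field_simp
  calc ε * ((2 ^ l : ℕ) : ℝ) ^ d = (M : ℝ) := hfin
    _ ≤ (Set.ncard {y : Fin d → Fin (2 ^ l) | G y ≠ ghat y} : ℝ) := by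
        exact_mod_cast hle
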